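/- The two extended Lindblad generators have identical diagonal blocks: under Assumption (R^{ij}_{−α} = δ_{ij} Lⁱ_α for α = 1,…,m₁), for every dn×dn complex matrix τ with diagonal blocks τⱼ = (I_d ⊗ Eⱼⱼ-compression of τ), one has, for every i, the i-th diagonal block of 𝓛̃[τ] equals the i-th diagonal block of 𝓛[τ], and both equal 𝒦ᵢ(τ₁,…,τₙ). -/

import Mathlib

open Matrix Kronecker

/-- A generic Lindblad generator `τ ↦ −i[H,τ] + ∑_γ ( A_γ τ A_γ* − ½{A_γ* A_γ, τ} )`. -/
noncomputable def lindGen {N : Type*} [Fintype N] {ι : Type*} [Fintype ι]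
    (H : Matrix N N ℂ) (A : ι → Matrix N N ℂ) (τ : Matrix N N ℂ) : Matrix N N ℂ :=
  -Complex.I • (H * τ - τ * H)
    + ∑ γ : ι, (A γ * τ * (A γ)ᴴ - (1/2 : ℂ) • ((A γ)ᴴ * A γ * τ + τ * ((A γ)ᴴ * A γ)))

/-- The Lindblad rate generator
`𝒦ᵢ(τ₁,…,τₙ) = −i[Hⁱ,τᵢ] + ∑_{α∈A} ∑_k ( R^{ik}_α τ_k (R^{ik}_α)* − ½{(R^{ki}_α)* R^{ki}_α, τᵢ} )`. -/
noncomputable def Kgen {n d : ℕ} {A : Type*} [Fintype A]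
    (H : Fin n → Matrix (Fin d) (Fin d) ℂ)
    (R : A → Fin n → Fin n → Matrix (Fin d) (Fin d) ℂ)
    (τ : Fin n → Matrix (Fin d) (Fin d) ℂ) (i : Fin n) :
    Matrix (Fin d) (Fin d) ℂ :=
  -Complex.I • (H i * τ i - τ i * H i)
    + ∑ α : A, ∑ k : Fin n,
      (R α i k * τ k * (R α i k)ᴴ
        - (1/2 : ℂ) • ((R α k i)ᴴ * R α k i * τ i + τ i * ((R α k i)ᴴ * R α k i)))

/-- The full family of operators `R^{ij}_α`, `α ∈ A = {−m₁,…,−1} ⊔ {1,…,m₂}`, under the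
assumption `R^{ij}_{−α} = δ_{ij} Lⁱ_α`: the negative indices (`Sum.inl`) carry the diagonal
operators `Lⁱ_α`, the positive ones (`Sum.inr`) the operators `R^{ij}_β`. -/
noncomputable def Rfull {n d m₁ m₂ : ℕ}
    (L : Fin m₁ → Fin n → Matrix (Fin d) (Fin d) ℂ)
    (R : Fin m₂ → Fin n → Fin n → Matrix (Fin d) (Fin d) ℂ) :
    (Fin m₁ ⊕ Fin m₂) → Fin n → Fin n → Matrix (Fin d) (Fin d) ℂ :=
  Sum.elim (fun α i j => if i = j then L α i else 0) R

/-- The `i`-th diagonal block of a matrix on `ℋ_S ⊗ ℂⁿ` (compression by `I_d ⊗ Eᵢᵢ`). -/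
def blk {n d : ℕ} (X : Matrix (Fin d × Fin n) (Fin d × Fin n) ℂ) (i : Fin n) :
    Matrix (Fin d) (Fin d) ℂ :=
  Matrix.of fun a c => X (a, i) (c, i)

/-! ### Auxiliary block machinery -/

/-- The general `(j,k)` block of a matrix on `ℋ_S ⊗ ℂⁿ`. -/
def oblk {n d : ℕ} (X : Matrix (Fin d × Fin n) (Fin d × Fin n) ℂ) (j k : Fin n) :
    Matrix (Fin d) (Fin d) ℂ := Matrix.of fun a c => X (a, j) (c, k)

section Aux

variable {n d : ℕ}

lemma blk_oblk (X : Matrix (Fin d × Fin n) (Fin d × Fin n) ℂ) (i : Fin n) :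
    blk X i = oblk X i i := rfl

lemma oblk_kmul (B : Matrix (Fin d) (Fin d) ℂ) (p q : Fin n)
    (τ : Matrix (Fin d × Fin n) (Fin d × Fin n) ℂ) (j k : Fin n) :
    oblk ((B ⊗ₖ Matrix.single p q (1:ℂ)) * τ) j k
      = if j = p then B * oblk τ q k else 0 := by
  ext a c
  simp only [oblk, Matrix.of_apply, Matrix.mul_apply, kroneckerMap_apply,
    Matrix.single, Matrix.of_apply, Fintype.sum_prod_type]
  by_cases h : j = p <;>
    simp [h, Finset.sum_ite_eq, ite_and, Matrix.mul_apply, eq_comm (a := p)]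

lemma oblk_mulk (B : Matrix (Fin d) (Fin d) ℂ) (p q : Fin n)
    (τ : Matrix (Fin d × Fin n) (Fin d × Fin n) ℂ) (j k : Fin n) :
    oblk (τ * (B ⊗ₖ Matrix.single p q (1:ℂ))) j k
      = if q = k then oblk τ j p * B else 0 := by
  ext a c
  simp only [oblk, Matrix.of_apply, Matrix.mul_apply, kroneckerMap_apply,
    Matrix.single, Matrix.of_apply, Fintype.sum_prod_type]
  by_cases h : q = k <;>
    simp [h, Finset.sum_ite_eq, ite_and, Matrix.mul_apply, eq_comm (a := p),
      mul_comm, mul_left_comm]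

lemma kron_std_conj (B : Matrix (Fin d) (Fin d) ℂ) (p q : Fin n) :
    (B ⊗ₖ Matrix.single p q (1:ℂ))ᴴ = Bᴴ ⊗ₖ Matrix.single q p (1:ℂ) := by
  ext ⟨a, j⟩ ⟨c, k⟩
  by_cases h1 : p = k <;> by_cases h2 : q = j <;>
    simp [h1, h2, conjTranspose_apply, Matrix.single, ite_and]

lemma oblk_add (X Y : Matrix (Fin d × Fin n) (Fin d × Fin n) ℂ) (j k : Fin n) :
    oblk (X + Y) j k = oblk X j k + oblk Y j k := rfl

lemma oblk_sub (X Y : Matrix (Fin d × Fin n) (Fin d × Fin n) ℂ) (j k : Fin n) :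
    oblk (X - Y) j k = oblk X j k - oblk Y j k := rfl

lemma oblk_smul (c : ℂ) (X : Matrix (Fin d × Fin n) (Fin d × Fin n) ℂ) (j k : Fin n) :
    oblk (c • X) j k = c • oblk X j k := rfl

lemma oblk_sum {ι : Type*} [Fintype ι] (F : ι → Matrix (Fin d × Fin n) (Fin d × Fin n) ℂ)
    (j k : Fin n) : oblk (∑ x : ι, F x) j k = ∑ x : ι, oblk (F x) j k := by
  ext a c; simp [oblk, Matrix.sum_apply]

lemma oblk_sandwich (B : Matrix (Fin d) (Fin d) ℂ) (p q : Fin n)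
    (τ : Matrix (Fin d × Fin n) (Fin d × Fin n) ℂ) (i : Fin n) :
    oblk ((B ⊗ₖ Matrix.single p q (1:ℂ)) * τ * (B ⊗ₖ Matrix.single p q (1:ℂ))ᴴ) i i
      = if i = p then B * oblk τ q q * Bᴴ else 0 := by
  rw [kron_std_conj, mul_assoc, oblk_kmul, oblk_mulk]
  by_cases h : i = p <;> simp [h, mul_assoc]

lemma oblk_ada_mul (B : Matrix (Fin d) (Fin d) ℂ) (p q : Fin n)
    (τ : Matrix (Fin d × Fin n) (Fin d × Fin n) ℂ) (i : Fin n) :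
    oblk ((B ⊗ₖ Matrix.single p q (1:ℂ))ᴴ * (B ⊗ₖ Matrix.single p q (1:ℂ)) * τ) i i
      = if i = q then Bᴴ * B * oblk τ i i else 0 := by
  rw [kron_std_conj, mul_assoc, oblk_kmul, oblk_kmul]
  by_cases h : i = q <;> simp [h, mul_assoc]

lemma oblk_mul_ada (B : Matrix (Fin d) (Fin d) ℂ) (p q : Fin n)
    (τ : Matrix (Fin d × Fin n) (Fin d × Fin n) ℂ) (i : Fin n) :
    oblk (τ * ((B ⊗ₖ Matrix.single p q (1:ℂ))ᴴ * (B ⊗ₖ Matrix.single p q (1:ℂ)))) i i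
      = if i = q then oblk τ i i * (Bᴴ * B) else 0 := by
  rw [kron_std_conj, ← mul_assoc, oblk_mulk, oblk_mulk]
  by_cases h : i = q <;> simp [h, mul_assoc, eq_comm (a := q)]

lemma oblk_W_sandwich (C : Fin n → Matrix (Fin d) (Fin d) ℂ) (g : Fin n → Fin n)
    (τ : Matrix (Fin d × Fin n) (Fin d × Fin n) ℂ) (i : Fin n) :
    oblk ((∑ j : Fin n, C j ⊗ₖ Matrix.single j (g j) (1:ℂ)) * τ
        * (∑ j : Fin n, C j ⊗ₖ Matrix.single j (g j) (1:ℂ))ᴴ) i i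
      = C i * oblk τ (g i) (g i) * (C i)ᴴ := by
  rw [conjTranspose_sum]
  simp only [kron_std_conj, Finset.sum_mul, Finset.mul_sum, oblk_sum, mul_assoc,
    oblk_kmul, oblk_mulk]
  simp [Finset.sum_ite_eq, Finset.sum_ite_eq', mul_ite, mul_zero, ite_mul, zero_mul,
    mul_assoc]

lemma oblk_W_ada (C : Fin n → Matrix (Fin d) (Fin d) ℂ) (g : Fin n → Fin n)
    (τ : Matrix (Fin d × Fin n) (Fin d × Fin n) ℂ) (i : Fin n) :
    oblk ((∑ j : Fin n, C j ⊗ₖ Matrix.single j (g j) (1:ℂ))ᴴ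
        * (∑ j : Fin n, C j ⊗ₖ Matrix.single j (g j) (1:ℂ)) * τ) i i
      = ∑ k : Fin n, if i = g k then (C k)ᴴ * C k * oblk τ i i else 0 := by
  rw [conjTranspose_sum]
  simp only [kron_std_conj, Finset.sum_mul, Finset.mul_sum, oblk_sum, mul_assoc,
    oblk_kmul]
  simp only [mul_ite, mul_zero, Finset.sum_ite_eq, Finset.mem_univ, if_true]
  refine Finset.sum_congr rfl fun k _ => ?_
  rw [Finset.sum_eq_single k]
  · by_cases h : i = g k <;> simp [h, mul_assoc]
  · intro b _ hb; simp [hb]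
  · simp

lemma oblk_W_mul_ada (C : Fin n → Matrix (Fin d) (Fin d) ℂ) (g : Fin n → Fin n)
    (τ : Matrix (Fin d × Fin n) (Fin d × Fin n) ℂ) (i : Fin n) :
    oblk (τ * ((∑ j : Fin n, C j ⊗ₖ Matrix.single j (g j) (1:ℂ))ᴴ
        * (∑ j : Fin n, C j ⊗ₖ Matrix.single j (g j) (1:ℂ)))) i i
      = ∑ k : Fin n, if i = g k then oblk τ i i * ((C k)ᴴ * C k) else 0 := by
  rw [conjTranspose_sum]
  simp only [kron_std_conj, Finset.sum_mul, Finset.mul_sum, oblk_sum, ← mul_assoc,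
    oblk_mulk]
  simp only [ite_mul, zero_mul, Finset.sum_ite_eq, Finset.mem_univ, if_true]
  refine Finset.sum_congr rfl fun k _ => ?_
  rw [Finset.sum_eq_single k]
  · by_cases h : i = g k
    · simp [← h, mul_assoc]
    · have h' : ¬ g k = i := fun h' => h h'.symm
      simp [h, h']
  · intro b _ hb; simp [hb]
  · simp

lemma oblk_hmul (H : Fin n → Matrix (Fin d) (Fin d) ℂ)
    (τ : Matrix (Fin d × Fin n) (Fin d × Fin n) ℂ) (i : Fin n) :
    oblk ((∑ j : Fin n, H j ⊗ₖ Matrix.single j j (1:ℂ)) * τ) i i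
      = H i * oblk τ i i := by
  simp [Finset.sum_mul, oblk_sum, oblk_kmul, Finset.sum_ite_eq]

lemma oblk_mulh (H : Fin n → Matrix (Fin d) (Fin d) ℂ)
    (τ : Matrix (Fin d × Fin n) (Fin d × Fin n) ℂ) (i : Fin n) :
    oblk (τ * (∑ j : Fin n, H j ⊗ₖ Matrix.single j j (1:ℂ))) i i
      = oblk τ i i * H i := by
  simp [Finset.mul_sum, oblk_sum, oblk_mulk, Finset.sum_ite_eq']

lemma inner_sum_eq {M : Type*} [AddCommGroup M] [Module ℂ M]
    (F G G' : Fin n → Fin n → M) (i : Fin n) :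
    (∑ p : Fin n, ∑ q : Fin n, ((if i = p then F p q else 0)
      - (1/2:ℂ) • ((if i = q then G p q else 0) + (if i = q then G' p q else 0))))
    = ∑ k : Fin n, (F i k - (1/2:ℂ) • (G k i + G' k i)) := by
  simp [Finset.sum_sub_distrib, Finset.sum_add_distrib, smul_add, Finset.smul_sum,
    Finset.sum_ite_irrel, Finset.sum_ite_eq, smul_ite]

lemma inner_sum_eq2 {M : Type*} [AddCommGroup M] [Module ℂ M]
    (f : Fin n → M) (G G' : Fin n → Fin n → M) (i : Fin n) :
    (∑ q : Fin n, (f q - (1/2:ℂ) • ((∑ k : Fin n, if i = q then G k q else 0)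
      + (∑ k : Fin n, if i = q then G' k q else 0))))
    = ∑ k : Fin n, (f k - (1/2:ℂ) • (G k i + G' k i)) := by
  simp [Finset.sum_sub_distrib, Finset.sum_add_distrib, smul_add, Finset.smul_sum,
    Finset.sum_ite_irrel, Finset.sum_ite_eq, smul_ite]

lemma oblk_V_sandwich (C : Fin n → Matrix (Fin d) (Fin d) ℂ)
    (τ : Matrix (Fin d × Fin n) (Fin d × Fin n) ℂ) (i : Fin n) :
    oblk ((∑ j : Fin n, C j ⊗ₖ Matrix.single j j (1:ℂ)) * τ
        * (∑ j : Fin n, C j ⊗ₖ Matrix.single j j (1:ℂ))ᴴ) i i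
      = C i * oblk τ i i * (C i)ᴴ :=
  oblk_W_sandwich C id τ i

lemma oblk_V_ada (C : Fin n → Matrix (Fin d) (Fin d) ℂ)
    (τ : Matrix (Fin d × Fin n) (Fin d × Fin n) ℂ) (i : Fin n) :
    oblk ((∑ j : Fin n, C j ⊗ₖ Matrix.single j j (1:ℂ))ᴴ
        * (∑ j : Fin n, C j ⊗ₖ Matrix.single j j (1:ℂ)) * τ) i i
      = (C i)ᴴ * C i * oblk τ i i := by
  have h := oblk_W_ada C id τ i
  simp only [id] at h
  rw [h]
  simp [Finset.sum_ite_eq]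

lemma oblk_V_mul_ada (C : Fin n → Matrix (Fin d) (Fin d) ℂ)
    (τ : Matrix (Fin d × Fin n) (Fin d × Fin n) ℂ) (i : Fin n) :
    oblk (τ * ((∑ j : Fin n, C j ⊗ₖ Matrix.single j j (1:ℂ))ᴴ
        * (∑ j : Fin n, C j ⊗ₖ Matrix.single j j (1:ℂ)))) i i
      = oblk τ i i * ((C i)ᴴ * C i) := by
  have h := oblk_W_mul_ada C id τ i
  simp only [id] at h
  rw [h]
  simp [Finset.sum_ite_eq]

lemma oblk_S_sandwich (C : Fin n → Matrix (Fin d) (Fin d) ℂ) (x : Fin n)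
    (τ : Matrix (Fin d × Fin n) (Fin d × Fin n) ℂ) (i : Fin n) :
    oblk ((∑ j : Fin n, C j ⊗ₖ Matrix.single j x (1:ℂ)) * τ
        * (∑ j : Fin n, C j ⊗ₖ Matrix.single j x (1:ℂ))ᴴ) i i
      = C i * oblk τ x x * (C i)ᴴ :=
  oblk_W_sandwich C (fun _ => x) τ i

lemma oblk_S_ada (C : Fin n → Matrix (Fin d) (Fin d) ℂ) (x : Fin n)
    (τ : Matrix (Fin d × Fin n) (Fin d × Fin n) ℂ) (i : Fin n) :
    oblk ((∑ j : Fin n, C j ⊗ₖ Matrix.single j x (1:ℂ))ᴴ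
        * (∑ j : Fin n, C j ⊗ₖ Matrix.single j x (1:ℂ)) * τ) i i
      = ∑ k : Fin n, if i = x then (C k)ᴴ * C k * oblk τ i i else 0 :=
  oblk_W_ada C (fun _ => x) τ i

lemma oblk_S_mul_ada (C : Fin n → Matrix (Fin d) (Fin d) ℂ) (x : Fin n)
    (τ : Matrix (Fin d × Fin n) (Fin d × Fin n) ℂ) (i : Fin n) :
    oblk (τ * ((∑ j : Fin n, C j ⊗ₖ Matrix.single j x (1:ℂ))ᴴ
        * (∑ j : Fin n, C j ⊗ₖ Matrix.single j x (1:ℂ)))) i i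
      = ∑ k : Fin n, if i = x then oblk τ i i * ((C k)ᴴ * C k) else 0 :=
  oblk_W_mul_ada C (fun _ => x) τ i

end Aux

/-- The two extended Lindblad generators `𝓛̃` (with Lindblad operators `S^{ij}_α = R^{ij}_α ⊗ Eᵢⱼ`)
and `𝓛` (with Lindblad operators `V_α = ∑ᵢ Lⁱ_α ⊗ Eᵢᵢ` and `S^j_β = ∑ᵢ R^{ij}_β ⊗ Eᵢⱼ`)
have identical diagonal blocks: for every `τ` and every `i`, the `i`-th diagonal block of
`𝓛̃[τ]` equals the `i`-th diagonal block of `𝓛[τ]`, and both equal `𝒦ᵢ(τ₁,…,τₙ)` where the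
`τⱼ` are the diagonal blocks of `τ`. -/
theorem ltilde_lL_same_diagonal_blocks {n d m₁ m₂ : ℕ} (hn : 1 ≤ n) (hd : 1 ≤ d)
    (H : Fin n → Matrix (Fin d) (Fin d) ℂ) (hH : ∀ i, (H i).IsHermitian)
    (L : Fin m₁ → Fin n → Matrix (Fin d) (Fin d) ℂ)
    (R : Fin m₂ → Fin n → Fin n → Matrix (Fin d) (Fin d) ℂ) :
    ∀ τ : Matrix (Fin d × Fin n) (Fin d × Fin n) ℂ, ∀ i : Fin n,
      blk (lindGen (∑ j : Fin n, H j ⊗ₖ Matrix.single j j (1 : ℂ))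
        (fun x : (Fin m₁ ⊕ Fin m₂) × Fin n × Fin n =>
          Rfull L R x.1 x.2.1 x.2.2 ⊗ₖ Matrix.single x.2.1 x.2.2 (1 : ℂ)) τ) i
        = Kgen H (Rfull L R) (fun j => blk τ j) i ∧
      blk (lindGen (∑ j : Fin n, H j ⊗ₖ Matrix.single j j (1 : ℂ))
        (Sum.elim
          (fun α : Fin m₁ => ∑ j : Fin n, L α j ⊗ₖ Matrix.single j j (1 : ℂ))
          (fun x : Fin m₂ × Fin n =>
            ∑ j : Fin n, R x.1 j x.2 ⊗ₖ Matrix.single j x.2 (1 : ℂ))) τ) i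
        = Kgen H (Rfull L R) (fun j => blk τ j) i := by
  intro τ i
  constructor
  · simp only [lindGen, Kgen, blk_oblk, oblk_add, oblk_smul, oblk_sub, oblk_sum,
      oblk_hmul, oblk_mulh, oblk_sandwich, oblk_ada_mul, oblk_mul_ada]
    congr 1
    rw [Fintype.sum_prod_type]
    refine Finset.sum_congr rfl fun α _ => ?_
    rw [Fintype.sum_prod_type]
    exact inner_sum_eq
      (fun p q => Rfull L R α p q * oblk τ q q * (Rfull L R α p q)ᴴ)
      (fun p q => (Rfull L R α p q)ᴴ * Rfull L R α p q * oblk τ i i)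
      (fun p q => oblk τ i i * ((Rfull L R α p q)ᴴ * Rfull L R α p q)) i
  · simp only [lindGen, Kgen, blk_oblk, oblk_add, oblk_smul, oblk_sub, oblk_sum,
      oblk_hmul, oblk_mulh]
    congr 1
    rw [Fintype.sum_sum_type, Fintype.sum_sum_type]
    congr 1
    · refine Finset.sum_congr rfl fun α _ => ?_
      simp only [Sum.elim_inl, Rfull, oblk_V_sandwich, oblk_V_ada, oblk_V_mul_ada]
      rw [Finset.sum_eq_single i]
      · simp
      · intro b _ hb
        have hb' : ¬ i = b := fun h => hb h.symm
        simp [hb, hb']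
      · simp
    · rw [Fintype.sum_prod_type]
      refine Finset.sum_congr rfl fun β _ => ?_
      simp only [Sum.elim_inr, Rfull, oblk_S_sandwich, oblk_S_ada, oblk_S_mul_ada]
      exact inner_sum_eq2 (fun q => R β i q * oblk τ q q * (R β i q)ᴴ)
        (fun k q => (R β k q)ᴴ * R β k q * oblk τ i i)
        (fun k q => oblk τ i i * ((R β k q)ᴴ * R β k q)) i
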